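/- For every integer m (positive, zero, or negative) there exist rational numbers a and b such that ∫_{1/4}^{1} t^m (4t−1)^{−1/2} dt = a·√3 + b·π. -/

import Mathlib

open intervalIntegral Real MeasureTheory Set

noncomputable def Iint (m : ℤ) : ℝ := ∫ t in (1/4 : ℝ)..1, t ^ m / Real.sqrt (4 * t - 1)

lemma hasDerivAt_sqrtlin {x : ℝ} (hx : 4 * x - 1 ≠ 0) :
    HasDerivAt (fun t : ℝ => Real.sqrt (4 * t - 1)) (2 / Real.sqrt (4 * x - 1)) x := by
  have h1 : HasDerivAt (fun t : ℝ => 4 * t - 1) 4 x := by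
    simpa using ((hasDerivAt_id x).const_mul 4).sub_const 1
  have h2 := (Real.hasDerivAt_sqrt hx).comp x h1
  exact h2.congr_deriv (by ring)

lemma intIm (m : ℤ) :
    IntervalIntegrable (fun t : ℝ => t ^ m / Real.sqrt (4 * t - 1)) volume (1/4) 1 := by
  have h0 : IntervalIntegrable (fun x : ℝ => x ^ (-(1/2) : ℝ)) volume 0 3 :=
    intervalIntegrable_rpow' (by norm_num)
  have h1 := h0.comp_mul_left (c := 4)
  have h2 := h1.comp_sub_right (1/4)
  have h3 : IntervalIntegrable (fun x : ℝ => (4 * x - 1) ^ (-(1/2) : ℝ)) volume (1/4) 1 := by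
    have he : (fun x : ℝ => (4 * (x - 1/4)) ^ (-(1/2) : ℝ))
        = fun x : ℝ => (4 * x - 1) ^ (-(1/2) : ℝ) := by
      funext x; ring_nf
    rw [he] at h2
    norm_num at h2
    convert h2 using 2 <;> norm_num
  have h4 := h3.const_mul ((4 : ℝ) ^ m.natAbs)
  apply h4.mono_fun
  · apply (ContinuousOn.aestronglyMeasurable ?_ measurableSet_uIoc)
    rw [Set.uIoc_of_le (by norm_num : (1/4 : ℝ) ≤ 1)]
    intro x hx
    have hx0 : x ≠ 0 := by have := hx.1; intro h; rw [h] at this; norm_num at this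
    have hxp : (0:ℝ) < 4 * x - 1 := by have := hx.1; linarith
    have hden : ContinuousAt (fun t : ℝ => Real.sqrt (4 * t - 1)) x :=
      (Real.continuous_sqrt.comp (by continuity)).continuousAt
    exact (ContinuousAt.div (continuousAt_zpow₀ x m (Or.inl hx0)) hden
      (Real.sqrt_pos.2 hxp).ne').continuousWithinAt
  · rw [Set.uIoc_of_le (by norm_num : (1/4 : ℝ) ≤ 1)]
    filter_upwards [ae_restrict_mem measurableSet_Ioc] with x hx
    have hxq : (1/4 : ℝ) < x := hx.1
    have hx1 : x ≤ 1 := hx.2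
    have hxp : (0:ℝ) < 4 * x - 1 := by linarith
    have hx0 : (0:ℝ) < x := by linarith
    have hs : Real.sqrt (4 * x - 1) = (4 * x - 1) ^ ((1:ℝ)/2) := Real.sqrt_eq_rpow _
    have hrp : (4 * x - 1) ^ (-(1/2) : ℝ) = 1 / Real.sqrt (4 * x - 1) := by
      rw [hs, Real.rpow_neg hxp.le, one_div]
      norm_num
    have hsp : 0 < Real.sqrt (4 * x - 1) := Real.sqrt_pos.2 hxp
    have hC : x ^ m ≤ (4 : ℝ) ^ m.natAbs := by
      rcases le_or_gt 0 m with hm | hm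
      · have hmn : m = (m.natAbs : ℤ) := by omega
        rw [hmn, zpow_natCast]
        calc x ^ m.natAbs ≤ 1 := pow_le_one₀ hx0.le hx1
          _ ≤ (4:ℝ) ^ m.natAbs := one_le_pow₀ (by norm_num)
      · set n := m.natAbs with hn
        have hmn : m = -(n : ℤ) := by omega
        rw [hmn, zpow_neg, zpow_natCast, ← inv_pow]
        have hxi : x⁻¹ ≤ 4 := by
          calc x⁻¹ ≤ ((4:ℝ)⁻¹)⁻¹ := inv_anti₀ (by norm_num) (by linarith)
            _ = 4 := by norm_num
        exact pow_le_pow_left₀ (by positivity) hxi n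
    have hxm : (0:ℝ) < x ^ m := zpow_pos hx0 m
    rw [Real.norm_eq_abs, Real.norm_eq_abs, hrp, abs_of_pos (by positivity),
      abs_of_pos (by positivity)]
    rw [div_le_iff₀ hsp] at *
    calc x ^ m ≤ (4:ℝ) ^ m.natAbs := hC
      _ = (4:ℝ) ^ m.natAbs * (1 / Real.sqrt (4*x-1)) * Real.sqrt (4*x-1) := by
          field_simp

lemma key (m : ℤ) :
    (4 * (m : ℝ) + 2) * Iint m - (m : ℝ) * Iint (m - 1) = Real.sqrt 3 := by
  have hFTC : (∫ t in (1/4 : ℝ)..1,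
      ((4 * (m:ℝ) + 2) * (t ^ m / Real.sqrt (4*t-1)) - (m:ℝ) * (t ^ (m-1) / Real.sqrt (4*t-1))))
      = (fun t : ℝ => t ^ m * Real.sqrt (4*t-1)) 1
        - (fun t : ℝ => t ^ m * Real.sqrt (4*t-1)) (1/4) := by
    apply intervalIntegral.integral_eq_sub_of_hasDeriv_right_of_le
      (f' := fun t : ℝ => (4 * (m:ℝ) + 2) * (t ^ m / Real.sqrt (4*t-1))
        - (m:ℝ) * (t ^ (m-1) / Real.sqrt (4*t-1)))
      (f := fun t : ℝ => t ^ m * Real.sqrt (4*t-1)) (a := 1/4) (b := 1) (by norm_num)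
    · apply ContinuousOn.mul
      · intro x hx
        have hx0 : x ≠ 0 := by have := hx.1; intro h; rw [h] at this; norm_num at this
        exact (continuousAt_zpow₀ x m (Or.inl hx0)).continuousWithinAt
      · exact (Real.continuous_sqrt.comp (by continuity)).continuousOn
    · intro x hx
      have hx0 : (0:ℝ) < x := by have := hx.1; linarith
      have hxp : (0:ℝ) < 4 * x - 1 := by have := hx.1; linarith
      have hs0 : Real.sqrt (4*x-1) ≠ 0 := (Real.sqrt_pos.2 hxp).ne'
      have h1 : HasDerivAt (fun t : ℝ => t ^ m) ((m:ℝ) * x ^ (m-1)) x :=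
        hasDerivAt_zpow m x (Or.inl hx0.ne')
      have h3 := h1.mul (hasDerivAt_sqrtlin hxp.ne')
      have heq : (m:ℝ) * x ^ (m-1) * Real.sqrt (4*x-1) + x ^ m * (2 / Real.sqrt (4*x-1))
          = (4 * (m:ℝ) + 2) * (x ^ m / Real.sqrt (4*x-1))
            - (m:ℝ) * (x ^ (m-1) / Real.sqrt (4*x-1)) := by
        have hsq : Real.sqrt (4*x-1) * Real.sqrt (4*x-1) = 4*x-1 := Real.mul_self_sqrt hxp.le
        have hxm : x ^ m = x ^ (m-1) * x := by
          rw [← zpow_add_one₀ hx0.ne', sub_add_cancel]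
        rw [hxm]
        field_simp
        linear_combination (m:ℝ) * hsq
      exact (heq ▸ h3).hasDerivWithinAt
    · exact ((intIm m).const_mul _).sub ((intIm (m-1)).const_mul _)
  rw [intervalIntegral.integral_sub ((intIm m).const_mul _) ((intIm (m-1)).const_mul _),
    intervalIntegral.integral_const_mul, intervalIntegral.integral_const_mul] at hFTC
  have h1 : (fun t : ℝ => t ^ m * Real.sqrt (4*t-1)) 1 = Real.sqrt 3 := by
    norm_num
  have h2 : (fun t : ℝ => t ^ m * Real.sqrt (4*t-1)) (1/4) = 0 := by
    norm_num
  rw [h1, h2, sub_zero] at hFTC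
  exact hFTC

lemma Iint_neg_one : Iint (-1) = 2 / 3 * Real.pi := by
  have hFTC : (∫ t in (1/4 : ℝ)..1, t ^ (-1 : ℤ) / Real.sqrt (4*t-1))
      = (fun t : ℝ => 2 * Real.arctan (Real.sqrt (4*t-1))) 1
        - (fun t : ℝ => 2 * Real.arctan (Real.sqrt (4*t-1))) (1/4) := by
    apply intervalIntegral.integral_eq_sub_of_hasDeriv_right_of_le
      (f' := fun t : ℝ => t ^ (-1 : ℤ) / Real.sqrt (4*t-1))
      (f := fun t : ℝ => 2 * Real.arctan (Real.sqrt (4*t-1))) (a := 1/4) (b := 1) (by norm_num)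
    · exact (continuous_const.mul (Real.continuous_arctan.comp
        (Real.continuous_sqrt.comp (by continuity)))).continuousOn
    · intro x hx
      have hx0 : (0:ℝ) < x := by have := hx.1; linarith
      have hxp : (0:ℝ) < 4 * x - 1 := by have := hx.1; linarith
      have hs0 : Real.sqrt (4*x-1) ≠ 0 := (Real.sqrt_pos.2 hxp).ne'
      have h1 := ((Real.hasDerivAt_arctan (Real.sqrt (4*x-1))).comp x
        (hasDerivAt_sqrtlin hxp.ne')).const_mul (2:ℝ)
      have heq : 2 * (1 / (1 + Real.sqrt (4*x-1) ^ 2) * (2 / Real.sqrt (4*x-1)))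
          = x ^ (-1 : ℤ) / Real.sqrt (4*x-1) := by
        have hsq : Real.sqrt (4*x-1) ^ 2 = 4*x-1 := Real.sq_sqrt hxp.le
        rw [hsq, zpow_neg_one]
        have h4 : (1 : ℝ) + (4*x-1) = 4*x := by ring
        rw [h4]
        field_simp
        ring
      exact (heq ▸ h1).hasDerivWithinAt
    · exact intIm (-1)
  have ha : Real.arctan (Real.sqrt 3) = Real.pi / 3 := by
    have ht : Real.sqrt 3 = Real.tan (Real.pi / 3) := by
      rw [Real.tan_eq_sin_div_cos, Real.sin_pi_div_three, Real.cos_pi_div_three]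
      ring
    rw [ht, Real.arctan_tan (by linarith [Real.pi_pos]) (by linarith [Real.pi_pos])]
  have h1 : (fun t : ℝ => 2 * Real.arctan (Real.sqrt (4*t-1))) 1 = 2/3 * Real.pi := by
    norm_num [ha]
    ring
  have h2 : (fun t : ℝ => 2 * Real.arctan (Real.sqrt (4*t-1))) (1/4) = 0 := by
    norm_num
  rw [h1, h2, sub_zero] at hFTC
  exact hFTC

lemma Iint_main (m : ℤ) :
    ∃ a b : ℚ, Iint m = (a : ℝ) * Real.sqrt 3 + (b : ℝ) * Real.pi := by
  induction m using Int.induction_on with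
  | zero =>
    refine ⟨1/2, 0, ?_⟩
    have h := key 0
    push_cast at h ⊢
    norm_num at h ⊢
    linarith
  | succ n ih =>
    obtain ⟨a, b, hab⟩ := ih
    refine ⟨(1 + ((n:ℚ)+1) * a) / (4*(n:ℚ)+6), (((n:ℚ)+1) * b) / (4*(n:ℚ)+6), ?_⟩
    have h := key ((n : ℤ) + 1)
    have hs : ((n:ℤ) + 1 - 1) = (n:ℤ) := by ring
    rw [hs, hab] at h
    have hd : (4 * (n:ℝ) + 6) ≠ 0 := by positivity
    push_cast at h ⊢
    field_simp
    linear_combination h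
  | pred n ih =>
    rcases n with _ | k
    · refine ⟨0, 2/3, ?_⟩
      have h0 : (-(0:ℕ) - 1 : ℤ) = -1 := by norm_num
      rw [h0, Iint_neg_one]
      push_cast
      ring
    · obtain ⟨a, b, hab⟩ := ih
      have h := key (-((k:ℤ)+1))
      have hs : (-((k:ℤ)+1) : ℤ) = -(↑(k+1)) := by push_cast; ring
      rw [hs, hab] at h
      set X := Iint (-(↑(k+1) : ℤ) - 1) with hX
      refine ⟨(1 + (4*(k:ℚ)+2) * a) / ((k:ℚ)+1), ((4*(k:ℚ)+2) * b) / ((k:ℚ)+1), ?_⟩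
      have hd : ((k:ℝ) + 1) ≠ 0 := by positivity
      push_cast at h ⊢
      field_simp
      linear_combination h

theorem integral_Im_mem_Q_sqrt3_pi (m : ℤ) :
    ∃ a b : ℚ, ∫ t in (1/4 : ℝ)..1, t ^ m / Real.sqrt (4 * t - 1) =
      (a : ℝ) * Real.sqrt 3 + (b : ℝ) * Real.pi := by
  exact Iint_main m
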